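/- Let G be a finite group of orientation preserving homeomorphisms of the circle S¹. Then G is cyclic. -/

import Mathlib

/-- The circle `ℝ/ℤ`. -/
abbrev Circle1 : Type := AddCircle (1 : ℝ)

/-- A permutation of the circle is an orientation preserving homeomorphism
if it lifts to an order preserving bijection (equivalently, an increasing
homeomorphism) of `ℝ`. -/
def OrientationPreservingHomeo (f : Equiv.Perm Circle1) : Prop :=
  ∃ F : ℝ ≃o ℝ, ∀ x : ℝ, f (↑x) = ((F x : ℝ) : Circle1)

lemma int_valued_const {u : ℝ → ℝ} (hu : Continuous u)
    (h : ∀ x, ∃ k : ℤ, u x = k) (x y : ℝ) : u x = u y := by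
  by_contra hne
  obtain ⟨k, hk⟩ := h x
  obtain ⟨m, hm⟩ := h y
  have hkm : k ≠ m := by rintro rfl; exact hne (hk.trans hm.symm)
  rcases lt_or_gt_of_ne hkm with hlt | hlt
  · have h1 : (k : ℝ) + 1/2 ∈ Set.Icc (u x) (u y) := by
      have : (k : ℝ) + 1 ≤ m := by exact_mod_cast hlt
      constructor
      · rw [hk]; linarith
      · rw [hm]; linarith
    obtain ⟨z, hz⟩ := intermediate_value_univ x y hu h1
    obtain ⟨j, hj⟩ := h z
    rw [hj] at hz
    have h2 : ((2 * j : ℤ) : ℝ) = ((2 * k + 1 : ℤ) : ℝ) := by push_cast; linarith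
    have : (2 * j : ℤ) = 2 * k + 1 := by exact_mod_cast h2
    omega
  · have h1 : (m : ℝ) + 1/2 ∈ Set.Icc (u y) (u x) := by
      have : (m : ℝ) + 1 ≤ k := by exact_mod_cast hlt
      constructor
      · rw [hm]; linarith
      · rw [hk]; linarith
    obtain ⟨z, hz⟩ := intermediate_value_univ y x hu h1
    obtain ⟨j, hj⟩ := h z
    rw [hj] at hz
    have h2 : ((2 * j : ℤ) : ℝ) = ((2 * m + 1 : ℤ) : ℝ) := by push_cast; linarith
    have : (2 * j : ℤ) = 2 * m + 1 := by exact_mod_cast h2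
    omega

lemma coe_eq_coe_int {a b : ℝ} (h : (a : Circle1) = b) : ∃ k : ℤ, a - b = k := by
  rw [QuotientAddGroup.eq_iff_sub_mem] at h
  obtain ⟨k, hk⟩ := AddSubgroup.mem_zmultiples_iff.mp h
  exact ⟨k, by simpa using hk.symm⟩

lemma coe_add_int (a : ℝ) (k : ℤ) : ((a + k : ℝ) : Circle1) = a := by
  rw [QuotientAddGroup.eq_iff_sub_mem]
  exact AddSubgroup.mem_zmultiples_iff.mpr ⟨k, by simp⟩

/-- A lift of a circle map satisfies F(x+1) = F(x) + k for a constant k ≥ 1. -/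
lemma lift_period_aux (f : Equiv.Perm Circle1) (F : ℝ ≃o ℝ)
    (hF : ∀ x : ℝ, f (↑x) = ((F x : ℝ) : Circle1)) :
    ∃ k : ℤ, 1 ≤ k ∧ ∀ x : ℝ, F (x + 1) = F x + k := by
  have hcont : Continuous fun x : ℝ => F (x + 1) - F x :=
    (F.toHomeomorph.continuous.comp (continuous_id.add continuous_const)).sub
      F.toHomeomorph.continuous
  have hint : ∀ x : ℝ, ∃ k : ℤ, F (x + 1) - F x = k := by
    intro x
    apply coe_eq_coe_int
    have h1 : ((x + 1 : ℝ) : Circle1) = x := by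
      simpa using coe_add_int x 1
    calc ((F (x + 1) : ℝ) : Circle1) = f ((x+1 : ℝ) : Circle1) := (hF _).symm
      _ = f (x : Circle1) := by rw [h1]
      _ = ((F x : ℝ) : Circle1) := hF x
  obtain ⟨k, hk⟩ := hint 0
  refine ⟨k, ?_, ?_⟩
  · have hpos : (0:ℝ) < F (0+1) - F 0 := by
      have := F.strictMono (show (0:ℝ) < 0+1 by norm_num)
      linarith
    rw [hk] at hpos
    exact_mod_cast hpos
  · intro x
    have := int_valued_const hcont hint x 0
    rw [hk] at this
    linarith

/-- In fact k = 1: lifts commute with translation by 1. -/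
lemma lift_period (f : Equiv.Perm Circle1) (F : ℝ ≃o ℝ)
    (hF : ∀ x : ℝ, f (↑x) = ((F x : ℝ) : Circle1)) :
    ∀ x : ℝ, F (x + 1) = F x + 1 := by
  obtain ⟨k, hk1, hk⟩ := lift_period_aux f F hF
  have hFsymm : ∀ y : ℝ, f⁻¹ (↑y) = ((F.symm y : ℝ) : Circle1) := by
    intro y
    have := hF (F.symm y)
    rw [F.apply_symm_apply] at this
    rw [← this, Equiv.Perm.inv_def, Equiv.symm_apply_apply]
  obtain ⟨m, hm1, hm⟩ := lift_period_aux f⁻¹ F.symm hFsymm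
  -- F.symm (y + n) = F.symm y + n * m for n : ℕ
  have hiter : ∀ n : ℕ, ∀ y : ℝ, F.symm (y + n) = F.symm y + n * m := by
    intro n
    induction n with
    | zero => simp
    | succ p ih =>
      intro y
      have : (y + (p+1 : ℕ) : ℝ) = (y + p) + 1 := by push_cast; ring
      rw [this, hm, ih]
      push_cast; ring
  -- 1 = k * m
  have key : ∀ x : ℝ, x + 1 = x + (k : ℝ) * m := by
    intro x
    have h1 : F.symm (F x + k) = x + 1 := by
      rw [← hk, F.symm_apply_apply]
    have h2 : F.symm (F x + (k.toNat : ℕ)) = F.symm (F x) + (k.toNat : ℕ) * m := hiter _ _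
    rw [F.symm_apply_apply] at h2
    have h3 : ((k.toNat : ℕ) : ℝ) = (k : ℝ) := by
      exact_mod_cast congrArg (Int.cast : ℤ → ℝ) (Int.toNat_of_nonneg (by omega))
    rw [h3] at h2
    rw [h2] at h1
    linarith
  have h1km : (1 : ℝ) = (k : ℝ) * m := by
    have := key 0
    linarith
  have hkm : k * m = 1 := by exact_mod_cast h1km.symm
  have hk_eq : k = 1 := by nlinarith [hk1, hm1, hkm]
  intro x
  rw [hk x, hk_eq]; norm_num

theorem finite_orientation_preserving_circle_group_is_cyclic
    (G : Type*) [Group G] [Finite G]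
    (φ : G →* Equiv.Perm Circle1) (hinj : Function.Injective φ)
    (hor : ∀ g : G, OrientationPreservingHomeo (φ g)) :
    IsCyclic G := by
  cases nonempty_fintype G
  choose F hF using hor
  set n := Fintype.card G with hn
  have hcontF : ∀ g : G, Continuous (F g) := fun g => (F g).toHomeomorph.continuous
  have hper : ∀ g : G, ∀ x : ℝ, F g (x + 1) = F g x + 1 :=
    fun g => lift_period (φ g) (F g) (hF g)
  -- lifts commute with integer translations
  have hperZ : ∀ (g : G) (m : ℤ) (x : ℝ), F g (x + m) = F g x + m := by
    intro g m
    induction m using Int.induction_on with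
    | zero => simp
    | succ p ih =>
      intro x
      have h1 : (x + ((p : ℤ) + 1 : ℤ) : ℝ) = (x + ((p : ℤ) : ℝ)) + 1 := by push_cast; ring
      rw [h1]
      have h2 := hper g (x + ((p : ℤ) : ℝ))
      rw [ih x] at h2
      rw [h2]; push_cast; ring
    | pred p ih =>
      intro x
      have h1 : (x + ((-(p:ℤ) - 1 : ℤ) : ℝ)) + 1 = x + ((-(p:ℤ) : ℤ) : ℝ) := by push_cast; ring
      have h2 := hper g (x + ((-(p:ℤ) - 1 : ℤ) : ℝ))
      rw [h1, ih] at h2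
      push_cast at h2 ⊢
      linarith
  -- the cocycle
  have hcoc : ∀ g h : G, ∃ c : ℤ, ∀ x : ℝ, F g (F h x) = F (g * h) x + c := by
    intro g h
    have hcont : Continuous fun x : ℝ => F g (F h x) - F (g * h) x :=
      ((hcontF g).comp (hcontF h)).sub (hcontF (g * h))
    have hint : ∀ x : ℝ, ∃ k : ℤ, F g (F h x) - F (g * h) x = k := by
      intro x
      apply coe_eq_coe_int
      calc ((F g (F h x) : ℝ) : Circle1) = (φ g) ((F h x : ℝ) : Circle1) := (hF g _).symm
        _ = (φ g) ((φ h) ((x : ℝ) : Circle1)) := by rw [hF h]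
        _ = (φ (g * h)) ((x : ℝ) : Circle1) := by rw [map_mul]; rfl
        _ = ((F (g * h) x : ℝ) : Circle1) := hF (g * h) x
    obtain ⟨k, hk⟩ := hint 0
    refine ⟨k, fun x => ?_⟩
    have := int_valued_const hcont hint x 0
    rw [hk] at this
    linarith
  choose c hc using hcoc
  -- the averaged map and total cocycle
  set ψ : ℝ → ℝ := fun x => ∑ g : G, F g x with hψ
  set C : G → ℤ := fun h => ∑ g : G, c g h with hC
  have hψmono : StrictMono ψ := by
    intro x y hxy
    exact Finset.sum_lt_sum_of_nonempty Finset.univ_nonempty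
      (fun g _ => (F g).strictMono hxy)
  have hψZ : ∀ (m : ℤ) (x : ℝ), ψ (x + m) = ψ x + n * m := by
    intro m x
    simp only [hψ]
    rw [Finset.sum_congr rfl (fun g _ => hperZ g m x), Finset.sum_add_distrib]
    simp [hn, mul_comm]
  have hψF : ∀ (h : G) (x : ℝ), ψ (F h x) = ψ x + C h := by
    intro h x
    simp only [hψ, hC]
    have hre : ∑ g : G, (F (g * h)) x = ∑ g : G, (F g) x :=
      Fintype.sum_equiv (Equiv.mulRight h) _ _ (fun g => rfl)
    rw [Finset.sum_congr rfl (fun g _ => hc g h x), Finset.sum_add_distrib, hre]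
    push_cast
    ring
  -- the homomorphism relation
  have hhom : ∀ h₁ h₂ : G, C (h₁ * h₂) + n * c h₁ h₂ = C h₁ + C h₂ := by
    intro h₁ h₂
    have e1 : ψ (F h₁ (F h₂ 0)) = ψ 0 + C h₂ + C h₁ := by
      rw [hψF h₁, hψF h₂]
    have e2 : ψ (F h₁ (F h₂ 0)) = ψ 0 + C (h₁ * h₂) + n * c h₁ h₂ := by
      rw [hc h₁ h₂ 0, hψZ, hψF]
    have : (C (h₁ * h₂) : ℝ) + n * c h₁ h₂ = C h₁ + C h₂ := by linarith
    exact_mod_cast this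
  -- build the homomorphism into ZMod n
  have hmap : ∀ h₁ h₂ : G, ((C (h₁ * h₂) : ZMod n)) = (C h₁ : ZMod n) + (C h₂ : ZMod n) := by
    intro h₁ h₂
    have := hhom h₁ h₂
    have : ((C (h₁ * h₂) + n * c h₁ h₂ : ℤ) : ZMod n) = ((C h₁ + C h₂ : ℤ) : ZMod n) := by
      exact_mod_cast congrArg _ this
    push_cast at this
    simpa [ZMod.natCast_self] using this
  have hone : ((C 1 : ZMod n)) = 0 := by
    have h1 := hhom 1 1
    rw [one_mul] at h1
    have : (C 1 : ℤ) = n * c 1 1 := by omega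
    rw [this]
    push_cast
    simp [ZMod.natCast_self]
  let ρ : G →* Multiplicative (ZMod n) :=
    { toFun := fun h => Multiplicative.ofAdd ((C h : ZMod n))
      map_one' := by simp [hone]
      map_mul' := fun h₁ h₂ => by
        simp only [hmap h₁ h₂]; rfl }
  -- injectivity
  have hρinj : Function.Injective ρ := by
    rw [injective_iff_map_eq_one]
    intro h hh
    have h0 : ((C h : ZMod n)) = 0 := by
      simpa [ρ] using congrArg Multiplicative.toAdd hh
    obtain ⟨m, hm⟩ := (ZMod.intCast_zmod_eq_zero_iff_dvd _ _).mp h0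
    have hFh : ∀ x : ℝ, F h x = x + m := by
      intro x
      apply hψmono.injective
      rw [hψF, hψZ, hm]
      push_cast; ring
    have hφh : φ h = 1 := by
      ext y
      refine QuotientAddGroup.induction_on y (fun x => ?_)
      show (φ h) ((x : ℝ) : Circle1) = ((x : ℝ) : Circle1)
      rw [hF h, hFh x, coe_add_int]
    apply hinj
    rw [hφh, map_one]
  -- conclude cyclicity
  have : IsCyclic (Multiplicative (ZMod n)) := inferInstance
  exact isCyclic_of_surjective (MonoidHom.ofInjective hρinj).symm (MonoidHom.ofInjective hρinj).symm.surjective
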